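/- If L is a finite meet-distributive lattice, then the number of join-irreducible elements of L equals the length of L. -/

import Mathlib

open scoped Classical

/-- A subset `X` of a lattice with `⊥` is CD-independent if any two
incomparable members meet to `⊥`. -/
def CDIndep {L : Type*} [Lattice L] [OrderBot L] (X : Set L) : Prop :=
  ∀ x ∈ X, ∀ y ∈ X, ¬ x ≤ y → ¬ y ≤ x → x ⊓ y = ⊥

/-- `X` is a maximal CD-independent subset of `S` (within the ambient lattice). -/
def MaxCDIndepIn {L : Type*} [Lattice L] [OrderBot L] (S X : Set L) : Prop :=
  X ⊆ S ∧ CDIndep X ∧ ∀ Y ⊆ S, CDIndep Y → X ⊆ Y → Y = X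

/-- `X` is a maximal CD-independent subset of the whole lattice. -/
def MaxCDIndep {L : Type*} [Lattice L] [OrderBot L] (X : Set L) : Prop :=
  MaxCDIndepIn Set.univ X

/-- The length of the subposet `S`: the size of a longest chain contained in `S`, minus 1. -/
noncomputable def chainLen {L : Type*} [Lattice L] [Fintype L] (S : Set L) : ℕ :=
  ((Finset.univ.powerset.filter
      fun C : Finset L => ↑C ⊆ S ∧ IsChain (· ≤ ·) (C : Set L)).sup Finset.card) - 1

/-- The length of the finite lattice `L`. -/
noncomputable def latLen (L : Type*) [Lattice L] [Fintype L] : ℕ :=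
  chainLen (Set.univ : Set L)

/-- `u_*`: the meet of all lower covers of `u`. -/
noncomputable def lowstar {L : Type*} [Lattice L] [Fintype L] [BoundedOrder L] (u : L) : L :=
  (Finset.univ.filter fun v => v ⋖ u).inf id

/-- `L` is meet-distributive if every interval `[u_*, u]` (for `u ≠ ⊥`) is distributive. -/
def MeetDistrib (L : Type*) [Lattice L] [Fintype L] [BoundedOrder L] : Prop :=
  ∀ u : L, u ≠ ⊥ → ∀ x ∈ Set.Icc (lowstar u) u, ∀ y ∈ Set.Icc (lowstar u) u,
    ∀ z ∈ Set.Icc (lowstar u) u, x ⊓ (y ⊔ z) = (x ⊓ y) ⊔ (x ⊓ z)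

/-- Lower semimodularity: `a ⋖ a ⊔ b` implies `a ⊓ b ⋖ b`. -/
def LowerSemimodular (L : Type*) [Lattice L] : Prop :=
  ∀ a b : L, a ⋖ a ⊔ b → a ⊓ b ⋖ b

/-- The number of atoms of `L`. -/
noncomputable def atomsCard (L : Type*) [Lattice L] [OrderBot L] : ℕ :=
  {a : L | IsAtom a}.ncard

/-- `b` is the pseudocomplement of `a`: the largest element meeting `a` to `⊥`. -/
def PseudoCompl {L : Type*} [Lattice L] [OrderBot L] (a b : L) : Prop :=
  a ⊓ b = ⊥ ∧ ∀ x, a ⊓ x = ⊥ → x ≤ b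

/-- `(a, b)` is a pseudocomplemented pair: each is the pseudocomplement of the other. -/
def PseudoPair {L : Type*} [Lattice L] [OrderBot L] (a b : L) : Prop :=
  PseudoCompl a b ∧ PseudoCompl b a

/-- An element is meet-irreducible if it has exactly one cover. -/
def MeetIrred {L : Type*} [Lattice L] (a : L) : Prop :=
  ∃! b, a ⋖ b

/-- `L` is dually slim: no three-element antichain of meet-irreducible elements. -/
def DuallySlim (L : Type*) [Lattice L] : Prop :=
  ¬ ∃ x y z : L, MeetIrred x ∧ MeetIrred y ∧ MeetIrred z ∧
    ¬ x ≤ y ∧ ¬ y ≤ x ∧ ¬ x ≤ z ∧ ¬ z ≤ x ∧ ¬ y ≤ z ∧ ¬ z ≤ y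

section Aux
variable {L : Type*} [Lattice L] [Fintype L] [BoundedOrder L]

lemma lowstar_le {b c : L} (h : c ⋖ b) : lowstar b ≤ c := by
  have hm : c ∈ Finset.univ.filter fun v => v ⋖ b := by simp [h]
  exact Finset.inf_le (f := id) hm

lemma aux_exists_le_covBy {x b : L} (h : x < b) : ∃ c, x ≤ c ∧ c ⋖ b := by
  obtain ⟨c, ⟨hxc, hcb⟩, hmax⟩ := Set.Finite.exists_maximalFor id {z : L | x ≤ z ∧ z < b}
    (Set.toFinite _) ⟨x, le_refl x, h⟩
  refine ⟨c, hxc, hcb, fun z hz hzb => ?_⟩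
  exact hz.not_ge (hmax ⟨hxc.trans hz.le, hzb⟩ hz.le)

lemma cov_le_eq {a c b : L} (hab : a ⋖ b) (hcb : c ⋖ b) (h : c ≤ a) : c = a := by
  rcases h.lt_or_eq with hlt | he
  · exact absurd hab.lt (hcb.2 hlt)
  · exact he

lemma dist3 (hMD : MeetDistrib L) {b x y z : L} (hb : b ≠ ⊥)
    (hx : lowstar b ≤ x) (hx' : x ≤ b) (hy : lowstar b ≤ y) (hy' : y ≤ b)
    (hz : lowstar b ≤ z) (hz' : z ≤ b) : x ⊓ (y ⊔ z) = (x ⊓ y) ⊔ (x ⊓ z) :=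
  hMD b hb x ⟨hx, hx'⟩ y ⟨hy, hy'⟩ z ⟨hz, hz'⟩

lemma lemB (hMD : MeetDistrib L) {a b c : L} (hab : a ⋖ b) (hcb : c ⋖ b) (hne : c ≠ a) :
    a ⊓ c ⋖ c := by
  have hb : b ≠ ⊥ := (bot_le.trans_lt hab.lt).ne'
  have hca : ¬ c ≤ a := fun h => hne (cov_le_eq hab hcb h)
  constructor
  · exact inf_lt_right.mpr hca
  · intro z hz hzc
    rcases hab.eq_or_eq le_sup_right (sup_le (hzc.le.trans hcb.le) hab.le) with h1 | h1
    · have hza : z ≤ a := le_sup_left.trans h1.le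
      exact hz.not_ge (le_inf hza hzc.le)
    · have h2 := dist3 hMD hb (lowstar_le hcb) hcb.le
        ((le_inf (lowstar_le hab) (lowstar_le hcb)).trans hz.le) (hzc.le.trans hcb.le)
        (lowstar_le hab) hab.le
      rw [h1, inf_eq_left.mpr hcb.le, inf_eq_right.mpr hzc.le,
        sup_eq_left.mpr ((inf_comm c a).le.trans hz.le)] at h2
      exact hzc.ne' h2

lemma lemNE (hMD : MeetDistrib L) {a b c c' : L} (hab : a ⋖ b) (hcb : c ⋖ b) (hc'b : c' ⋖ b)
    (hca : c ≠ a) (hc'a : c' ≠ a) (hcc' : c ≠ c') : ¬ c ⊓ c' ≤ a := by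
  intro h
  have hb : b ≠ ⊥ := (bot_le.trans_lt hab.lt).ne'
  have hca' : ¬ c ≤ a := fun hle => hca (cov_le_eq hab hcb hle)
  have h2 : c' ⊓ c ⋖ c := lemB hMD hc'b hcb hcc'
  have h2' : c ⊓ c' ⋖ c' := lemB hMD hcb hc'b hcc'.symm
  have e1 : a ⊓ c = c' ⊓ c := by
    rcases h2.eq_or_eq (le_inf ((inf_comm c' c).le.trans h) inf_le_right) inf_le_right with e | e
    · exact e
    · exact absurd (e.symm.trans_le inf_le_left) hca'
  have haup : a ⊔ c' = b := by
    rcases hab.eq_or_eq le_sup_left (sup_le hab.le hc'b.le) with e | e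
    · exact absurd (cov_le_eq hab hc'b (le_sup_right.trans e.le)) hc'a
    · exact e
  have hd : c ⊓ (a ⊔ c') = (c ⊓ a) ⊔ (c ⊓ c') :=
    dist3 hMD hb (lowstar_le hcb) hcb.le (lowstar_le hab) hab.le (lowstar_le hc'b) hc'b.le
  rw [haup, inf_eq_left.mpr hcb.le] at hd
  have hca2 : c ⊓ a = c ⊓ c' := by rw [inf_comm c a, e1, inf_comm c' c]
  rw [hca2, sup_idem] at hd
  exact hcc' (cov_le_eq hc'b hcb (hd.le.trans inf_le_right))

lemma lemB3 (hMD : MeetDistrib L) {a b c c' : L} (hab : a ⋖ b) (hcb : c ⋖ b) (hc'b : c' ⋖ b)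
    (hca : c ≠ a) (hc'a : c' ≠ a) (hcc' : c ≠ c') : a ⊓ (c ⊓ c') ⋖ c ⊓ c' := by
  have hb : b ≠ ⊥ := (bot_le.trans_lt hab.lt).ne'
  have hne : ¬ c ⊓ c' ≤ a := lemNE hMD hab hcb hc'b hca hc'a hcc'
  constructor
  · exact inf_lt_right.mpr hne
  · intro z hz hz2
    rcases hab.eq_or_eq le_sup_right
        (sup_le (hz2.le.trans (inf_le_left.trans hcb.le)) hab.le) with h1 | h1
    · exact hz.not_ge (le_inf (le_sup_left.trans h1.le) hz2.le)
    · have hls : lowstar b ≤ c ⊓ c' := le_inf (lowstar_le hcb) (lowstar_le hc'b)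
      have h2 := dist3 hMD hb hls (inf_le_left.trans hcb.le)
        ((le_inf (lowstar_le hab) hls).trans hz.le)
        (hz2.le.trans (inf_le_left.trans hcb.le)) (lowstar_le hab) hab.le
      rw [h1, inf_eq_left.mpr (inf_le_left.trans hcb.le), inf_eq_right.mpr hz2.le,
        sup_eq_left.mpr ((inf_comm (c ⊓ c') a).le.trans hz.le)] at h2
      exact hz2.ne' h2

lemma lemA (hMD : MeetDistrib L) :
    ∀ b a : L, a ⋖ b →
      ∃ m : L, SupIrred m ∧ m ≤ b ∧ ¬ m ≤ a ∧
        (∀ x, x ≤ b → ¬ x ≤ a → m ≤ x) ∧ (∀ j, SupIrred j → j ≤ b → ¬ j ≤ a → j = m) := by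
  intro b
  induction b using WellFoundedLT.induction with
  | ind b IH =>
    intro a hab
    by_cases hc0 : ∃ c : L, c ⋖ b ∧ c ≠ a
    · -- at least two lower covers
      obtain ⟨c0, hc0b, hc0a⟩ := hc0
      -- for each lower cover `c ≠ a`, get the minimum by IH
      have H : ∀ c : L, c ⋖ b → c ≠ a →
          ∃ m : L, SupIrred m ∧ m ≤ c ∧ ¬ m ≤ a ⊓ c ∧
            (∀ x, x ≤ c → ¬ x ≤ a ⊓ c → m ≤ x) ∧
            (∀ j, SupIrred j → j ≤ c → ¬ j ≤ a ⊓ c → j = m) :=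
        fun c hcb hca => IH c hcb.lt (a ⊓ c) (lemB hMD hab hcb hca)
      choose mf hmf1 hmf2 hmf3 hmf4 hmf5 using H
      -- the minima agree across different covers
      have key : ∀ c (hcb : c ⋖ b) (hca : c ≠ a) c' (hc'b : c' ⋖ b) (hc'a : c' ≠ a),
          mf c hcb hca = mf c' hc'b hc'a := by
        intro c hcb hca c' hc'b hc'a
        by_cases hcc' : c = c'
        · subst hcc'; rfl
        · obtain ⟨m'', hm1, hm2, hm3, hm4, hm5⟩ :=
            IH (c ⊓ c') (inf_le_left.trans_lt hcb.lt) (a ⊓ (c ⊓ c'))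
              (lemB3 hMD hab hcb hc'b hca hc'a hcc')
          have hstep : ∀ d (hdb : d ⋖ b) (hda : d ≠ a) d' (hd'b : d' ⋖ b) (hd'a : d' ≠ a)
              (hdd' : d ≠ d'), mf d hdb hda ≤ d ⊓ d' := by
            intro d hdb hda d' hd'b hd'a hdd'
            exact hmf4 d hdb hda (d ⊓ d') inf_le_left
              (fun hle => lemNE hMD hab hdb hd'b hda hd'a hdd' (hle.trans inf_le_left))
          have e1 : mf c hcb hca = m'' := by
            refine hm5 _ (hmf1 c hcb hca) (hstep c hcb hca c' hc'b hc'a hcc') ?_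
            intro hle
            exact hmf3 c hcb hca (le_inf (hle.trans inf_le_left) (hmf2 c hcb hca))
          have e2 : mf c' hc'b hc'a = m'' := by
            refine hm5 _ (hmf1 c' hc'b hc'a) ?_ ?_
            · have := hstep c' hc'b hc'a c hcb hca (fun h => hcc' h.symm)
              exact this.trans (by rw [inf_comm])
            · intro hle
              exact hmf3 c' hc'b hc'a (le_inf (hle.trans inf_le_left) (hmf2 c' hc'b hc'a))
          rw [e1, e2]
      set m := mf c0 hc0b hc0a with hm
      have hmc0 : m ≤ c0 := hmf2 c0 hc0b hc0a
      have hma : ¬ m ≤ a := fun h => hmf3 c0 hc0b hc0a (le_inf h hmc0)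
      have hgen : ∀ x, x ≤ b → ¬ x ≤ a → x ≠ b → m ≤ x := by
        intro x hxb hxa hxb'
        obtain ⟨c, hxc, hcb⟩ := aux_exists_le_covBy (hxb.lt_of_ne hxb')
        have hca : c ≠ a := fun h => hxa (h ▸ hxc)
        have := hmf4 c hcb hca x hxc (fun h => hxa (h.trans inf_le_left))
        exact (key c0 hc0b hc0a c hcb hca).trans_le this
      have hbsup : a ⊔ c0 = b := by
        rcases hab.eq_or_eq le_sup_left (sup_le hab.le hc0b.le) with e | e
        · exact absurd (cov_le_eq hab hc0b (le_sup_right.trans e.le)) hc0a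
        · exact e
      refine ⟨m, hmf1 c0 hc0b hc0a, hmc0.trans hc0b.le, hma, ?_, ?_⟩
      · intro x hxb hxa
        by_cases hx : x = b
        · exact hx ▸ (hmc0.trans hc0b.le)
        · exact hgen x hxb hxa hx
      · intro j hj hjb hja
        have hjb' : j ≠ b := by
          intro h
          subst h
          rcases hj.2 hbsup with e | e
          · exact hab.lt.ne e
          · exact hc0b.lt.ne e
        obtain ⟨c, hjc, hcb⟩ := aux_exists_le_covBy (hjb.lt_of_ne hjb')
        have hca : c ≠ a := fun h => hja (h ▸ hjc)
        have := hmf5 c hcb hca j hj hjc (fun h => hja (h.trans inf_le_left))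
        rw [this]
        exact key c hcb hca c0 hc0b hc0a
    · -- b join-irreducible: its only lower cover is a
      push_neg at hc0
      have hlt : ∀ x : L, x < b → x ≤ a := by
        intro x hx
        obtain ⟨c, hxc, hcb⟩ := aux_exists_le_covBy hx
        exact (hc0 c hcb) ▸ hxc
      have hsi : SupIrred b := by
        constructor
        · exact fun h => absurd (h hab.le) hab.lt.not_ge
        · intro x y hxy
          by_contra hcon
          push_neg at hcon
          have hx : x ≤ a := hlt x ((le_sup_left.trans_eq hxy).lt_of_ne hcon.1)
          have hy : y ≤ a := hlt y ((le_sup_right.trans_eq hxy).lt_of_ne hcon.2)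
          exact hab.lt.not_ge (hxy ▸ sup_le hx hy)
      have hmin : ∀ x, x ≤ b → ¬ x ≤ a → b ≤ x := by
        intro x hxb hxa
        rcases hxb.lt_or_eq with h | h
        · exact absurd (hlt x h) hxa
        · exact h.ge
      exact ⟨b, hsi, le_refl b, fun h => hab.lt.not_ge h, hmin,
        fun j hj hjb hja => le_antisymm hjb (hmin j hjb hja)⟩

end Aux


theorem meetDistrib_card_supIrred_eq_length {L : Type*} [Lattice L] [Fintype L]
    [BoundedOrder L] (hMD : MeetDistrib L) :
    {a : L | SupIrred a}.ncard = latLen L := by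
  classical
  set P := Finset.univ.powerset.filter
      (fun C : Finset L => ↑C ⊆ (Set.univ : Set L) ∧ IsChain (· ≤ ·) (C : Set L)) with hP
  set N := P.sup Finset.card with hNdef
  have hlat : latLen L = N - 1 := rfl
  have hmax : ∀ D : Finset L, IsChain (· ≤ ·) (D : Set L) → D.card ≤ N := by
    intro D hD
    exact Finset.le_sup (f := Finset.card)
      (by simp [hP, Finset.mem_filter, Set.subset_univ, hD])
  obtain ⟨C, hCmem, hCsup⟩ :=
    Finset.exists_mem_eq_sup P ⟨∅, by simp [hP]⟩ Finset.card
  have hChain : IsChain (· ≤ ·) (C : Set L) := (Finset.mem_filter.mp hCmem).2.2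
  have hCcard : N = C.card := hCsup
  have hN1 : 1 ≤ N := by
    have := hmax {⊥} (by simp)
    simpa using this
  obtain ⟨n, hN⟩ : ∃ n, N = n + 1 := ⟨N - 1, by omega⟩
  -- linear order on the chain
  letI : LinearOrder {x : L // x ∈ C} :=
    { (inferInstance : PartialOrder {x : L // x ∈ C}) with
      le_total := fun x y => hChain.total (Finset.mem_coe.mpr x.2) (Finset.mem_coe.mpr y.2)
      toDecidableLE := fun _ _ => Classical.dec _ }
  have hcard : Fintype.card {x : L // x ∈ C} = n + 1 := by
    rw [Fintype.card_coe]; omega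
  let e := Fintype.orderIsoFinOfCardEq {x : L // x ∈ C} hcard
  set f : Fin (n + 1) → L := fun i => ((e i : {x : L // x ∈ C}) : L) with hf
  have hfmem : ∀ i, f i ∈ C := fun i => (e i).2
  have hfs : StrictMono f := fun i j hij => Subtype.coe_lt_coe.mpr (e.strictMono hij)
  have hsurj : ∀ x ∈ C, ∃ i, f i = x := by
    intro x hx
    exact ⟨e.symm ⟨x, hx⟩, by simp [hf]⟩
  -- extremes
  have hbotC : (⊥ : L) ∈ C := by
    by_contra hb
    have hch : IsChain (· ≤ ·) ((insert ⊥ C : Finset L) : Set L) := by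
      rw [Finset.coe_insert]
      exact hChain.insert (fun y _ _ => Or.inl bot_le)
    have := hmax _ hch
    rw [Finset.card_insert_of_notMem hb] at this
    omega
  have htopC : (⊤ : L) ∈ C := by
    by_contra hb
    have hch : IsChain (· ≤ ·) ((insert ⊤ C : Finset L) : Set L) := by
      rw [Finset.coe_insert]
      exact hChain.insert (fun y _ _ => Or.inr le_top)
    have := hmax _ hch
    rw [Finset.card_insert_of_notMem hb] at this
    omega
  have hf0 : f 0 = ⊥ := by
    obtain ⟨k, hk⟩ := hsurj ⊥ hbotC
    exact le_bot_iff.mp (hk ▸ hfs.monotone (Fin.zero_le k))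
  have hflast : f (Fin.last n) = ⊤ := by
    obtain ⟨k, hk⟩ := hsurj ⊤ htopC
    exact top_le_iff.mp (hk ▸ hfs.monotone (Fin.le_last k))
  -- consecutive covers
  have hcov : ∀ i : Fin n, f i.castSucc ⋖ f i.succ := by
    intro i
    constructor
    · exact hfs (Fin.castSucc_lt_succ (i := i))
    · intro z hz1 hz2
      have hzC : z ∉ C := by
        intro hzC
        obtain ⟨k, hk⟩ := hsurj z hzC
        rcases le_or_gt k i.castSucc with h | h
        · exact hz1.not_ge (hk ▸ hfs.monotone h)
        · exact hz2.not_ge (hk ▸ hfs.monotone (Fin.castSucc_lt_iff_succ_le.mp h))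
      have hch : IsChain (· ≤ ·) ((insert z C : Finset L) : Set L) := by
        rw [Finset.coe_insert]
        refine hChain.insert (fun y hy _ => ?_)
        obtain ⟨k, hk⟩ := hsurj y hy
        rcases le_or_gt k i.castSucc with h | h
        · exact Or.inr ((hk ▸ hfs.monotone h).trans hz1.le)
        · exact Or.inl (hz2.le.trans (hk ▸ hfs.monotone (Fin.castSucc_lt_iff_succ_le.mp h)))
      have := hmax _ hch
      rw [Finset.card_insert_of_notMem hzC] at this
      omega
  -- natural-number indexed version
  set F : ℕ → L := fun k => f ⟨min k n, lt_of_le_of_lt (Nat.min_le_right k n) (Nat.lt_succ_self n)⟩ with hF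
  have hFeq : ∀ k (h : k ≤ n), F k = f ⟨k, Nat.lt_succ_of_le h⟩ := by
    intro k hk
    simp only [hF]
    congr 1
    exact Fin.mk.injEq _ _ _ _ ▸ Nat.min_eq_left hk
  have hFmono : Monotone F := by
    intro k l hkl
    exact hfs.monotone (by simp only [Fin.mk_le_mk]; omega)
  have hF0 : F 0 = ⊥ := by rw [hFeq 0 (by omega)]; exact hf0 ▸ rfl
  have hFtop : F n = ⊤ := by
    rw [hFeq n le_rfl]
    exact hflast ▸ rfl
  have hFcov : ∀ k, k < n → F k ⋖ F (k + 1) := by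
    intro k hk
    rw [hFeq k (by omega), hFeq (k + 1) (by omega)]
    have := hcov ⟨k, hk⟩
    convert this using 2 <;> simp [Fin.castSucc, Fin.succ]
  -- choose join-irreducibles
  have hAex : ∀ k, ∃ m : L, k < n → SupIrred m ∧ m ≤ F (k + 1) ∧ ¬ m ≤ F k ∧
      ∀ j, SupIrred j → j ≤ F (k + 1) → ¬ j ≤ F k → j = m := by
    intro k
    by_cases hk : k < n
    · obtain ⟨m, h1, h2, h3, _, h5⟩ := lemA hMD (F (k + 1)) (F k) (hFcov k hk)
      exact ⟨m, fun _ => ⟨h1, h2, h3, h5⟩⟩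
    · exact ⟨⊥, fun h => absurd h hk⟩
  choose g hg using hAex
  have hset : {a : L | SupIrred a} = g '' Set.Iio n := by
    ext j
    simp only [Set.mem_setOf_eq, Set.mem_image, Set.mem_Iio]
    constructor
    · intro hj
      have hjne : j ≠ ⊥ := fun h => hj.1 (h ▸ isMin_bot)
      have hex : ∃ k, j ≤ F k := ⟨n, hFtop ▸ le_top⟩
      have hk0 : j ≤ F (Nat.find hex) := Nat.find_spec hex
      have hk0n : Nat.find hex ≤ n := Nat.find_min' hex (hFtop ▸ le_top)
      have hk0pos : Nat.find hex ≠ 0 := by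
        intro h
        rw [h, hF0] at hk0
        exact hjne (le_bot_iff.mp hk0)
      obtain ⟨k', hk'eq⟩ : ∃ k', Nat.find hex = k' + 1 := ⟨Nat.find hex - 1, by omega⟩
      have hk' : k' < n := by omega
      have hnotle : ¬ j ≤ F k' := Nat.find_min hex (by omega)
      exact ⟨k', hk', ((hg k' hk').2.2.2 j hj (hk'eq ▸ hk0) hnotle).symm⟩
    · rintro ⟨k, hk, rfl⟩
      exact (hg k hk).1
  have hkey : ∀ k l : ℕ, k < l → l < n → g k ≠ g l := by
    intro k l hkl hln h
    have h1 : g k ≤ F l := ((hg k (hkl.trans hln)).2.1).trans (hFmono (by omega : k + 1 ≤ l))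
    exact (hg l hln).2.2.1 (h ▸ h1)
  have hinj : Set.InjOn g (Set.Iio n) := by
    intro k hk l hl he
    rcases lt_trichotomy k l with h | h | h
    · exact absurd he (hkey k l h hl)
    · exact h
    · exact absurd he.symm (hkey l k h hk)
  rw [hset, Set.ncard_image_of_injOn hinj, hlat]
  rw [← Finset.coe_range, Set.ncard_coe_finset, Finset.card_range]
  omega
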